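/- Let W be the subgroup of PGL₂(ℂ) generated by ω₁ and ω₂, and let N be the normalizer of W in PGL₂(ℂ). Then the quotient group N/W is isomorphic to the symmetric group S₃ on three letters. -/

import Mathlib

/-- `PGL₂(ℂ)`: the quotient of `GL₂(ℂ)` by its center. -/
noncomputable abbrev PGL2C : Type :=
  GL (Fin 2) ℂ ⧸ Subgroup.center (GL (Fin 2) ℂ)

/-- `ω₁`, the class of the matrix `[[-1,0],[0,1]]` in `PGL₂(ℂ)`. -/
noncomputable def omega1 : PGL2C :=
  QuotientGroup.mk (Matrix.GeneralLinearGroup.mkOfDetNeZero !![(-1 : ℂ), 0; 0, 1]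
    (by simp [Matrix.det_fin_two_of]))

/-- `ω₂`, the class of the matrix `[[0,1],[1,0]]` in `PGL₂(ℂ)`. -/
noncomputable def omega2 : PGL2C :=
  QuotientGroup.mk (Matrix.GeneralLinearGroup.mkOfDetNeZero !![(0 : ℂ), 1; 1, 0]
    (by simp [Matrix.det_fin_two_of]))

/-- `W`, the (Klein four) subgroup of `PGL₂(ℂ)` generated by `ω₁` and `ω₂`. -/
noncomputable def Wgrp : Subgroup PGL2C :=
  Subgroup.closure {omega1, omega2}

namespace S3Aux

open Matrix

abbrev Mat := Matrix (Fin 2) (Fin 2) ℂ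

lemma entries {A B : Mat} (h : A = B) :
    A 0 0 = B 0 0 ∧ A 0 1 = B 0 1 ∧ A 1 0 = B 1 0 ∧ A 1 1 = B 1 1 := by
  subst h; exact ⟨rfl, rfl, rfl, rfl⟩

lemma center_iff {A : GL (Fin 2) ℂ} :
    A ∈ Subgroup.center (GL (Fin 2) ℂ) ↔ ∃ c : ℂ, (A : Mat) = c • (1 : Mat) := by
  constructor
  · intro h
    have h' := Subgroup.mem_center_iff.mp h
    have e1 := congrArg Units.val (h' (Matrix.GeneralLinearGroup.mkOfDetNeZero !![(1:ℂ),1;0,1]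
      (by simp [Matrix.det_fin_two_of])))
    have e2 := congrArg Units.val (h' (Matrix.GeneralLinearGroup.mkOfDetNeZero !![(1:ℂ),0;1,1]
      (by simp [Matrix.det_fin_two_of])))
    rw [Units.val_mul, Units.val_mul] at e1 e2
    have hA : (A : Mat) = !![A.val 0 0, A.val 0 1; A.val 1 0, A.val 1 1] := Matrix.eta_fin_two _
    rw [show ((Matrix.GeneralLinearGroup.mkOfDetNeZero !![(1:ℂ),1;0,1] _ : GL (Fin 2) ℂ) : Mat)
        = !![(1:ℂ),1;0,1] from rfl, hA, Matrix.mul_fin_two, Matrix.mul_fin_two] at e1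
    rw [show ((Matrix.GeneralLinearGroup.mkOfDetNeZero !![(1:ℂ),0;1,1] _ : GL (Fin 2) ℂ) : Mat)
        = !![(1:ℂ),0;1,1] from rfl, hA, Matrix.mul_fin_two, Matrix.mul_fin_two] at e2
    obtain ⟨p1, p2, p3, p4⟩ := entries e1
    obtain ⟨q1, q2, q3, q4⟩ := entries e2
    simp only [Matrix.cons_val_zero, Matrix.cons_val_one, Matrix.head_cons, Matrix.head_fin_const,
      Matrix.of_apply, Matrix.cons_val', Matrix.empty_val'] at p1 p2 p3 p4 q1 q2 q3 q4
    refine ⟨A.val 0 0, ?_⟩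
    rw [hA]
    have hb : A.val 0 1 = 0 := by linear_combination -q1
    have hc : A.val 1 0 = 0 := by linear_combination p1
    have hd : A.val 1 1 = A.val 0 0 := by linear_combination p2
    ext i j
    fin_cases i <;> fin_cases j <;> simp [hb, hc, hd, Matrix.one_apply]
  · rintro ⟨c, hc⟩
    refine Subgroup.mem_center_iff.mpr fun g => Units.ext ?_
    rw [Units.val_mul, Units.val_mul, hc]
    simp [Matrix.smul_mul, Matrix.mul_smul]

lemma mk_eq {a b : GL (Fin 2) ℂ} :
    (QuotientGroup.mk a : PGL2C) = QuotientGroup.mk b ↔ ∃ c : ℂ, (b : Mat) = c • (a : Mat) := by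
  rw [QuotientGroup.eq, center_iff]
  constructor
  · rintro ⟨c, hc⟩
    refine ⟨c, ?_⟩
    have h : (a * (a⁻¹ * b) : GL (Fin 2) ℂ) = b := by group
    calc (b : Mat) = ((a * (a⁻¹ * b) : GL (Fin 2) ℂ) : Mat) := by rw [h]
    _ = (a : Mat) * ((a⁻¹ * b : GL (Fin 2) ℂ) : Mat) := Units.val_mul _ _
    _ = (a : Mat) * (c • (1:Mat)) := by rw [hc]
    _ = c • (a : Mat) := by rw [Matrix.mul_smul, mul_one]
  · rintro ⟨c, hc⟩
    refine ⟨c, ?_⟩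
    calc ((a⁻¹ * b : GL (Fin 2) ℂ) : Mat) = (↑(a⁻¹) : Mat) * (b : Mat) := Units.val_mul _ _
    _ = (↑(a⁻¹) : Mat) * (c • (a : Mat)) := by rw [hc]
    _ = c • ((↑(a⁻¹) : Mat) * (a : Mat)) := by rw [Matrix.mul_smul]
    _ = c • ((1 : GL (Fin 2) ℂ) : Mat) := by rw [← Units.val_mul, inv_mul_cancel]
    _ = c • (1 : Mat) := rfl

noncomputable def pg (A : Mat) (h : A.det ≠ 0) : PGL2C :=
  QuotientGroup.mk (Matrix.GeneralLinearGroup.mkOfDetNeZero A h)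

lemma pg_eq {A B : Mat} {hA : A.det ≠ 0} {hB : B.det ≠ 0} :
    pg A hA = pg B hB ↔ ∃ c : ℂ, B = c • A := mk_eq

lemma pg_mul (A B : Mat) (hA : A.det ≠ 0) (hB : B.det ≠ 0) :
    pg A hA * pg B hB = pg (A*B) (by rw [Matrix.det_mul]; exact mul_ne_zero hA hB) := by
  show QuotientGroup.mk _ = QuotientGroup.mk _
  congr 1
  exact Units.ext rfl

lemma pg_one (h : (1 : Mat).det ≠ 0) : pg 1 h = 1 := by
  show QuotientGroup.mk _ = QuotientGroup.mk 1
  congr 1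
  exact Units.ext rfl

def M1 : Mat := !![(-1:ℂ),0;0,1]
def M2 : Mat := !![(0:ℂ),1;1,0]
def M3 : Mat := !![(0:ℂ),-1;1,0]
def MB : Mat := !![(1:ℂ),1;1,-1]
def MC : Mat := !![(1:ℂ),1;Complex.I,-Complex.I]

lemma d1 : M1.det ≠ 0 := by simp [M1, Matrix.det_fin_two_of]
lemma d2 : M2.det ≠ 0 := by simp [M2, Matrix.det_fin_two_of]
lemma d3 : M3.det ≠ 0 := by simp [M3, Matrix.det_fin_two_of]
lemma dB : MB.det ≠ 0 := by norm_num [MB, Matrix.det_fin_two_of]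
lemma dC : MC.det ≠ 0 := by simp [MC, Matrix.det_fin_two_of]; norm_num [Complex.ext_iff]

noncomputable def o1 : PGL2C := pg M1 d1
noncomputable def o2 : PGL2C := pg M2 d2
noncomputable def o3 : PGL2C := pg M3 d3
noncomputable def ob : PGL2C := pg MB dB
noncomputable def oc : PGL2C := pg MC dC

lemma o1_eq : omega1 = o1 := rfl
lemma o2_eq : omega2 = o2 := rfl

-- multiplication table
lemma t11 : o1 * o1 = 1 := by
  rw [o1, pg_mul, ← pg_one (by simp), pg_eq]
  exact ⟨1, by ext i j; fin_cases i <;> fin_cases j <;> norm_num [M1, Matrix.mul_fin_two]⟩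
lemma t22 : o2 * o2 = 1 := by
  rw [o2, pg_mul, ← pg_one (by simp), pg_eq]
  exact ⟨1, by ext i j; fin_cases i <;> fin_cases j <;> norm_num [M2, Matrix.mul_fin_two]⟩
lemma t33 : o3 * o3 = 1 := by
  rw [o3, pg_mul, ← pg_one (by simp), pg_eq]
  exact ⟨-1, by ext i j; fin_cases i <;> fin_cases j <;> norm_num [M3, Matrix.mul_fin_two]⟩
lemma t12 : o1 * o2 = o3 := by
  rw [o1, o2, o3, pg_mul, pg_eq]
  exact ⟨1, by ext i j; fin_cases i <;> fin_cases j <;> norm_num [M1, M2, M3, Matrix.mul_fin_two]⟩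
lemma t21 : o2 * o1 = o3 := by
  rw [o1, o2, o3, pg_mul, pg_eq]
  exact ⟨-1, by ext i j; fin_cases i <;> fin_cases j <;> norm_num [M1, M2, M3, Matrix.mul_fin_two]⟩
lemma t13 : o1 * o3 = o2 := by
  rw [o1, o2, o3, pg_mul, pg_eq]
  exact ⟨1, by ext i j; fin_cases i <;> fin_cases j <;> norm_num [M1, M2, M3, Matrix.mul_fin_two]⟩
lemma t31 : o3 * o1 = o2 := by
  rw [o1, o2, o3, pg_mul, pg_eq]
  exact ⟨-1, by ext i j; fin_cases i <;> fin_cases j <;> norm_num [M1, M2, M3, Matrix.mul_fin_two]⟩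
lemma t23 : o2 * o3 = o1 := by
  rw [o1, o2, o3, pg_mul, pg_eq]
  exact ⟨-1, by ext i j; fin_cases i <;> fin_cases j <;> norm_num [M1, M2, M3, Matrix.mul_fin_two]⟩
lemma t32 : o3 * o2 = o1 := by
  rw [o1, o2, o3, pg_mul, pg_eq]
  exact ⟨1, by ext i j; fin_cases i <;> fin_cases j <;> norm_num [M1, M2, M3, Matrix.mul_fin_two]⟩

-- conjugation relations for MB
lemma rb1 : ob * o1 = o2 * ob := by
  rw [ob, o1, o2, pg_mul, pg_mul, pg_eq]
  exact ⟨-1, by ext i j; fin_cases i <;> fin_cases j <;> norm_num [M1, M2, MB, Matrix.mul_fin_two]⟩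
lemma rb2 : ob * o2 = o1 * ob := by
  rw [ob, o1, o2, pg_mul, pg_mul, pg_eq]
  exact ⟨-1, by ext i j; fin_cases i <;> fin_cases j <;> norm_num [M1, M2, MB, Matrix.mul_fin_two]⟩
lemma rb3 : ob * o3 = o3 * ob := by
  rw [ob, o3, pg_mul, pg_mul, pg_eq]
  exact ⟨-1, by ext i j; fin_cases i <;> fin_cases j <;> norm_num [M3, MB, Matrix.mul_fin_two]⟩

-- conjugation relations for MC
lemma rc1 : oc * o1 = o3 * oc := by
  rw [oc, o1, o3, pg_mul, pg_mul, pg_eq]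
  refine ⟨Complex.I, ?_⟩
  ext i j; fin_cases i <;> fin_cases j <;>
    simp [M1, M3, MC, Matrix.mul_fin_two, Complex.I_mul_I]
lemma rc2 : oc * o2 = o1 * oc := by
  rw [oc, o1, o2, pg_mul, pg_mul, pg_eq]
  refine ⟨-1, ?_⟩
  ext i j; fin_cases i <;> fin_cases j <;>
    simp [M1, M2, MC, Matrix.mul_fin_two, Complex.I_mul_I]
lemma rc3 : oc * o3 = o2 * oc := by
  rw [oc, o2, o3, pg_mul, pg_mul, pg_eq]
  refine ⟨Complex.I, ?_⟩
  ext i j; fin_cases i <;> fin_cases j <;>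
    simp [M2, M3, MC, Matrix.mul_fin_two, Complex.I_mul_I]

-- distinctness
lemma ne11 : o1 ≠ 1 := by
  intro h
  rw [o1, ← pg_one (show (1:Mat).det ≠ 0 by simp)] at h
  obtain ⟨c, hc⟩ := pg_eq.mp h
  obtain ⟨h1, -, -, h4⟩ := entries hc
  simp [M1] at h1 h4
  rw [← h4] at h1; norm_num at h1
lemma ne21 : o2 ≠ 1 := by
  intro h
  rw [o2, ← pg_one (show (1:Mat).det ≠ 0 by simp)] at h
  obtain ⟨c, hc⟩ := pg_eq.mp h
  obtain ⟨h1, -, -, -⟩ := entries hc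
  simp [M2] at h1
lemma ne31 : o3 ≠ 1 := by
  intro h
  rw [o3, ← pg_one (show (1:Mat).det ≠ 0 by simp)] at h
  obtain ⟨c, hc⟩ := pg_eq.mp h
  obtain ⟨h1, -, -, -⟩ := entries hc
  simp [M3] at h1
lemma ne12 : o1 ≠ o2 := by
  intro h
  rw [o1, o2] at h
  obtain ⟨c, hc⟩ := pg_eq.mp h
  obtain ⟨-, h2, -, -⟩ := entries hc
  simp [M1, M2] at h2
lemma ne13 : o1 ≠ o3 := by
  intro h
  rw [o1, o3] at h
  obtain ⟨c, hc⟩ := pg_eq.mp h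
  obtain ⟨-, h2, -, -⟩ := entries hc
  simp [M1, M3] at h2
lemma ne23 : o2 ≠ o3 := by
  intro h
  rw [o2, o3] at h
  obtain ⟨c, hc⟩ := pg_eq.mp h
  obtain ⟨-, h2, h3, -⟩ := entries hc
  simp [M2, M3] at h2 h3
  rw [← h3] at h2; norm_num at h2

lemma wo1 : o1 ∈ Wgrp := Subgroup.subset_closure (by rw [← o1_eq]; left; rfl)
lemma wo2 : o2 ∈ Wgrp := Subgroup.subset_closure (by rw [← o2_eq]; right; rfl)
lemma wo3 : o3 ∈ Wgrp := t12 ▸ mul_mem wo1 wo2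

lemma W_eq {x : PGL2C} (hx : x ∈ Wgrp) : x = 1 ∨ x = o1 ∨ x = o2 ∨ x = o3 := by
  refine Subgroup.closure_induction
    (p := fun g _ => g = 1 ∨ g = o1 ∨ g = o2 ∨ g = o3) ?_ (Or.inl rfl) ?_ ?_ hx
  · rintro y (rfl | rfl)
    · exact Or.inr (Or.inl o1_eq.symm)
    · exact Or.inr (Or.inr (Or.inl o2_eq.symm))
  · rintro y z - - (rfl|rfl|rfl|rfl) (rfl|rfl|rfl|rfl) <;>
      simp only [one_mul, mul_one, t11, t22, t33, t12, t21, t13, t31, t23, t32] <;> tauto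
  · rintro y - (rfl|rfl|rfl|rfl)
    · left; simp
    · right; left; exact (eq_inv_of_mul_eq_one_left t11).symm
    · right; right; left; exact (eq_inv_of_mul_eq_one_left t22).symm
    · right; right; right; exact (eq_inv_of_mul_eq_one_left t33).symm

lemma conj_inj {g a b : PGL2C} (h : g * a * g⁻¹ = g * b * g⁻¹) : a = b :=
  mul_left_cancel (mul_right_cancel h)

lemma conj_one (g : PGL2C) : g * 1 * g⁻¹ = 1 := by group

lemma mem_norm_of {g a1 a2 a3 : PGL2C}
    (m1 : a1 ∈ Wgrp) (m2 : a2 ∈ Wgrp) (m3 : a3 ∈ Wgrp)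
    (h1 : g * o1 = a1 * g) (h2 : g * o2 = a2 * g) (h3 : g * o3 = a3 * g)
    (s1 : ∃ y, (y = 1 ∨ y = o1 ∨ y = o2 ∨ y = o3) ∧ g * y * g⁻¹ = o1)
    (s2 : ∃ y, (y = 1 ∨ y = o1 ∨ y = o2 ∨ y = o3) ∧ g * y * g⁻¹ = o2)
    (s3 : ∃ y, (y = 1 ∨ y = o1 ∨ y = o2 ∨ y = o3) ∧ g * y * g⁻¹ = o3) :
    g ∈ (Subgroup.normalizer (Wgrp : Set PGL2C)) := by
  have c1 : g * o1 * g⁻¹ = a1 := by rw [h1]; group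
  have c2 : g * o2 * g⁻¹ = a2 := by rw [h2]; group
  have c3 : g * o3 * g⁻¹ = a3 := by rw [h3]; group
  rw [Subgroup.mem_normalizer_iff]
  intro x
  constructor
  · intro hx
    rcases W_eq hx with rfl|rfl|rfl|rfl
    · rw [conj_one]; exact one_mem _
    · rw [c1]; exact m1
    · rw [c2]; exact m2
    · rw [c3]; exact m3
  · intro hx
    rcases W_eq hx with h|h|h|h
    · rw [← conj_one g] at h
      rw [conj_inj h]; exact one_mem _
    · obtain ⟨y, hy, hy2⟩ := s1
      rw [← hy2] at h
      rw [conj_inj h]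
      rcases hy with rfl|rfl|rfl|rfl
      exacts [one_mem _, wo1, wo2, wo3]
    · obtain ⟨y, hy, hy2⟩ := s2
      rw [← hy2] at h
      rw [conj_inj h]
      rcases hy with rfl|rfl|rfl|rfl
      exacts [one_mem _, wo1, wo2, wo3]
    · obtain ⟨y, hy, hy2⟩ := s3
      rw [← hy2] at h
      rw [conj_inj h]
      rcases hy with rfl|rfl|rfl|rfl
      exacts [one_mem _, wo1, wo2, wo3]

lemma conj_of_rel {g x y : PGL2C} (h : g * x = y * g) : g * x * g⁻¹ = y := by
  rw [h]; group

lemma hb_mem : ob ∈ (Subgroup.normalizer (Wgrp : Set PGL2C)) :=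
  mem_norm_of wo2 wo1 wo3 rb1 rb2 rb3
    ⟨o2, by tauto, conj_of_rel rb2⟩ ⟨o1, by tauto, conj_of_rel rb1⟩ ⟨o3, by tauto, conj_of_rel rb3⟩

lemma hc_mem : oc ∈ (Subgroup.normalizer (Wgrp : Set PGL2C)) :=
  mem_norm_of wo3 wo1 wo2 rc1 rc2 rc3
    ⟨o2, by tauto, conj_of_rel rc2⟩ ⟨o3, by tauto, conj_of_rel rc3⟩ ⟨o1, by tauto, conj_of_rel rc1⟩

-- the centralizer computation
lemma central {g : GL (Fin 2) ℂ}
    (h1 : (QuotientGroup.mk g : PGL2C) * o1 = o1 * QuotientGroup.mk g)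
    (h2 : (QuotientGroup.mk g : PGL2C) * o2 = o2 * QuotientGroup.mk g) :
    (QuotientGroup.mk g : PGL2C) ∈ Wgrp := by
  have hdet : (g : Mat).det ≠ 0 := by
    have : IsUnit (g : Mat) := ⟨g, rfl⟩
    rw [Matrix.isUnit_iff_isUnit_det, isUnit_iff_ne_zero] at this
    exact this
  have hA : (g : Mat) = !![g.val 0 0, g.val 0 1; g.val 1 0, g.val 1 1] := Matrix.eta_fin_two _
  set a := g.val 0 0 with ha
  set b := g.val 0 1 with hb
  set c := g.val 1 0 with hcc
  set d := g.val 1 1 with hd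
  have hdet' : a * d - b * c ≠ 0 := by
    rw [hA, Matrix.det_fin_two_of] at hdet; exact hdet
  have e1 : ∃ lam : ℂ, M1 * (g : Mat) = lam • ((g : Mat) * M1) := by
    have : pg ((g:Mat) * M1) (by rw [Matrix.det_mul]; exact mul_ne_zero hdet d1)
        = pg (M1 * (g:Mat)) (by rw [Matrix.det_mul]; exact mul_ne_zero d1 hdet) := by
      rw [pg]
      rw [show Matrix.GeneralLinearGroup.mkOfDetNeZero ((g:Mat) * M1) _
        = g * Matrix.GeneralLinearGroup.mkOfDetNeZero M1 d1 from Units.ext rfl]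
      rw [pg, show Matrix.GeneralLinearGroup.mkOfDetNeZero (M1 * (g:Mat)) _
        = Matrix.GeneralLinearGroup.mkOfDetNeZero M1 d1 * g from Units.ext rfl]
      rw [QuotientGroup.mk_mul, QuotientGroup.mk_mul]
      exact h1
    exact pg_eq.mp this
  have e2 : ∃ mu : ℂ, M2 * (g : Mat) = mu • ((g : Mat) * M2) := by
    have : pg ((g:Mat) * M2) (by rw [Matrix.det_mul]; exact mul_ne_zero hdet d2)
        = pg (M2 * (g:Mat)) (by rw [Matrix.det_mul]; exact mul_ne_zero d2 hdet) := by
      rw [pg]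
      rw [show Matrix.GeneralLinearGroup.mkOfDetNeZero ((g:Mat) * M2) _
        = g * Matrix.GeneralLinearGroup.mkOfDetNeZero M2 d2 from Units.ext rfl]
      rw [pg, show Matrix.GeneralLinearGroup.mkOfDetNeZero (M2 * (g:Mat)) _
        = Matrix.GeneralLinearGroup.mkOfDetNeZero M2 d2 * g from Units.ext rfl]
      rw [QuotientGroup.mk_mul, QuotientGroup.mk_mul]
      exact h2
    exact pg_eq.mp this
  obtain ⟨lam, hl⟩ := e1
  obtain ⟨mu, hm⟩ := e2
  rw [hA] at hl hm
  rw [M1, Matrix.mul_fin_two, Matrix.mul_fin_two] at hl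
  rw [M2, Matrix.mul_fin_two, Matrix.mul_fin_two] at hm
  obtain ⟨l1, l2, l3, l4⟩ := entries hl
  obtain ⟨m1, m2, m3, m4⟩ := entries hm
  simp only [Matrix.smul_apply, Matrix.cons_val_zero, Matrix.cons_val_one, Matrix.head_cons,
    Matrix.head_fin_const, Matrix.of_apply, Matrix.cons_val', Matrix.empty_val',
    smul_eq_mul] at l1 l2 l3 l4 m1 m2 m3 m4
  have L1 : a * (lam - 1) = 0 := by linear_combination l1
  have L2 : b * (lam + 1) = 0 := by linear_combination -l2
  have L3 : c * (lam + 1) = 0 := by linear_combination l3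
  have M1e : c = mu * b := by linear_combination m1
  have M2e : d = mu * a := by linear_combination m2
  have M3e : a = mu * d := by linear_combination m3
  have M4e : b = mu * c := by linear_combination m4
  have L4 : d * (lam - 1) = 0 := by linear_combination -l4
  have hmk : (QuotientGroup.mk g : PGL2C) = pg (g : Mat) hdet := by
    rw [pg]; congr 1; exact Units.ext rfl
  by_cases hlam : lam = 1
  · subst hlam
    have hb0 : b = 0 := by
      rcases mul_eq_zero.mp L2 with h|h
      · exact h
      · exact absurd (by linear_combination h) (two_ne_zero (α := ℂ))
    have hc0 : c = 0 := by
      rcases mul_eq_zero.mp L3 with h|h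
      · exact h
      · exact absurd (by linear_combination h) (two_ne_zero (α := ℂ))
    have hane : a ≠ 0 := fun h0 => hdet' (by linear_combination d * h0 - c * hb0)
    have hmu2 : mu = 1 ∨ mu = -1 := by
      refine mul_self_eq_one_iff.mp ?_
      have h' : a * (mu * mu - 1) = 0 := by linear_combination -M3e - mu * M2e
      rcases mul_eq_zero.mp h' with h|h
      · exact absurd h hane
      · linear_combination h
    rcases hmu2 with hmu | hmu
    · subst hmu
      have hda : d = a := by linear_combination M2e
      have : pg (g : Mat) hdet = pg 1 (show (1:Mat).det ≠ 0 by simp) := by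
        rw [pg_eq]
        refine ⟨a⁻¹, ?_⟩
        rw [hA, hb0, hc0, hda]
        ext i j; fin_cases i <;> fin_cases j <;> simp [hane]
      rw [hmk, this, pg_one]; exact one_mem _
    · subst hmu
      have hda : d = -a := by linear_combination M2e
      have : pg (g : Mat) hdet = pg M1 d1 := by
        rw [pg_eq]
        refine ⟨-a⁻¹, ?_⟩
        rw [hA, hb0, hc0, hda]
        ext i j; fin_cases i <;> fin_cases j <;> simp [M1, hane]
      rw [hmk, this]; exact wo1
  · have ha0 : a = 0 := by
      rcases mul_eq_zero.mp L1 with h|h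
      · exact h
      · exact absurd (by linear_combination h) hlam
    have hd0 : d = 0 := by
      rcases mul_eq_zero.mp L4 with h|h
      · exact h
      · exact absurd (by linear_combination h) hlam
    have hbne : b ≠ 0 := fun h0 => hdet' (by linear_combination d * ha0 - c * h0)
    have hmu2 : mu = 1 ∨ mu = -1 := by
      refine mul_self_eq_one_iff.mp ?_
      have h' : b * (mu * mu - 1) = 0 := by linear_combination -M4e - mu * M1e
      rcases mul_eq_zero.mp h' with h|h
      · exact absurd h hbne
      · linear_combination h
    rcases hmu2 with hmu | hmu
    · subst hmu
      have hcb : c = b := by linear_combination M1e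
      have : pg (g : Mat) hdet = pg M2 d2 := by
        rw [pg_eq]
        refine ⟨b⁻¹, ?_⟩
        rw [hA, ha0, hd0, hcb]
        ext i j; fin_cases i <;> fin_cases j <;> simp [M2, hbne]
      rw [hmk, this]; exact wo2
    · subst hmu
      have hcb : c = -b := by linear_combination M1e
      have : pg (g : Mat) hdet = pg M3 d3 := by
        rw [pg_eq]
        refine ⟨-b⁻¹, ?_⟩
        rw [hA, ha0, hd0, hcb]
        ext i j; fin_cases i <;> fin_cases j <;> simp [M3, hbne]
      rw [hmk, this]; exact wo3

-- the three-element set on which the normalizer acts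
def OmegaT : Type := {x : PGL2C // x = o1 ∨ x = o2 ∨ x = o3}

lemma mem_W_of_omega {x : PGL2C} (h : x = o1 ∨ x = o2 ∨ x = o3) : x ∈ Wgrp := by
  rcases h with rfl|rfl|rfl
  exacts [wo1, wo2, wo3]

noncomputable instance : SMul ↥(Subgroup.normalizer (Wgrp : Set PGL2C)) OmegaT where
  smul g x := ⟨(g : PGL2C) * x.1 * (g : PGL2C)⁻¹, by
    have hx : x.1 ∈ Wgrp := mem_W_of_omega x.2
    have hmem : (g : PGL2C) * x.1 * (g : PGL2C)⁻¹ ∈ Wgrp :=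
      (Subgroup.mem_normalizer_iff.mp g.2 _).mp hx
    rcases W_eq hmem with h|h|h|h
    · exfalso
      rw [← conj_one (g : PGL2C)] at h
      have hx1 := conj_inj h
      rcases x.2 with h'|h'|h'
      · exact ne11 (h' ▸ hx1)
      · exact ne21 (h' ▸ hx1)
      · exact ne31 (h' ▸ hx1)
    · exact Or.inl h
    · exact Or.inr (Or.inl h)
    · exact Or.inr (Or.inr h)⟩

lemma smul_val (g : ↥(Subgroup.normalizer (Wgrp : Set PGL2C))) (x : OmegaT) :
    (g • x).1 = (g : PGL2C) * x.1 * (g : PGL2C)⁻¹ := rfl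

noncomputable instance : MulAction ↥(Subgroup.normalizer (Wgrp : Set PGL2C)) OmegaT where
  one_smul x := Subtype.ext (by rw [smul_val]; simp)
  mul_smul g h x := Subtype.ext (by
    rw [smul_val, smul_val, smul_val, Subgroup.coe_mul, _root_.mul_inv_rev]
    group)

noncomputable def f3 : Fin 3 → OmegaT :=
  ![⟨o1, Or.inl rfl⟩, ⟨o2, Or.inr (Or.inl rfl)⟩, ⟨o3, Or.inr (Or.inr rfl)⟩]

lemma hf3 : Function.Bijective f3 := by
  constructor
  · intro i j h
    have h' := congrArg Subtype.val h
    fin_cases i <;> fin_cases j <;> simp [f3] at h' ⊢ <;>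
      first
        | rfl
        | exact absurd h' ne12 | exact absurd h' ne13 | exact absurd h' ne23
        | exact absurd h'.symm ne12 | exact absurd h'.symm ne13 | exact absurd h'.symm ne23
  · intro x
    rcases x.2 with h|h|h
    · exact ⟨0, Subtype.ext h.symm⟩
    · exact ⟨1, Subtype.ext h.symm⟩
    · exact ⟨2, Subtype.ext h.symm⟩

noncomputable def E3 : Fin 3 ≃ OmegaT := Equiv.ofBijective f3 hf3
noncomputable def e3 : OmegaT ≃ Fin 3 := E3.symm

def permMulEquiv {α β : Type*} (e : α ≃ β) : Equiv.Perm α ≃* Equiv.Perm β :=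
  { Equiv.permCongr e with
    map_mul' := fun p q => by
      ext x
      simp [Equiv.permCongr_apply] }

noncomputable def φ : ↥(Subgroup.normalizer (Wgrp : Set PGL2C)) →* Equiv.Perm (Fin 3) :=
  (permMulEquiv e3).toMonoidHom.comp (MulAction.toPermHom ↥(Subgroup.normalizer (Wgrp : Set PGL2C)) OmegaT)

lemma φ_apply (g : ↥(Subgroup.normalizer (Wgrp : Set PGL2C))) (i : Fin 3) : φ g i = e3 (g • E3 i) := rfl

lemma e3_eq {y : OmegaT} {j : Fin 3} (h : y.1 = (f3 j).1) : e3 y = j := by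
  have hy : y = E3 j := Subtype.ext h
  rw [hy]
  exact E3.symm_apply_apply j

noncomputable def bN : ↥(Subgroup.normalizer (Wgrp : Set PGL2C)) := ⟨ob, hb_mem⟩
noncomputable def cN : ↥(Subgroup.normalizer (Wgrp : Set PGL2C)) := ⟨oc, hc_mem⟩

def kperm : Equiv.Perm (Fin 3) := ⟨![2,0,1], ![1,2,0], by decide, by decide⟩

lemma φb : φ bN = Equiv.swap 0 1 := by
  refine Equiv.ext fun i => ?_
  fin_cases i
  · show φ bN 0 = (Equiv.swap 0 1) 0
    rw [show (Equiv.swap 0 1 : Equiv.Perm (Fin 3)) 0 = 1 by decide, φ_apply]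
    exact e3_eq (conj_of_rel rb1)
  · show φ bN 1 = (Equiv.swap 0 1) 1
    rw [show (Equiv.swap 0 1 : Equiv.Perm (Fin 3)) 1 = 0 by decide, φ_apply]
    exact e3_eq (conj_of_rel rb2)
  · show φ bN 2 = (Equiv.swap 0 1) 2
    rw [show (Equiv.swap 0 1 : Equiv.Perm (Fin 3)) 2 = 2 by decide, φ_apply]
    exact e3_eq (conj_of_rel rb3)

lemma φc : φ cN = kperm := by
  refine Equiv.ext fun i => ?_
  fin_cases i
  · show φ cN 0 = (kperm) 0
    rw [show (kperm : Equiv.Perm (Fin 3)) 0 = 2 by decide, φ_apply]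
    exact e3_eq (conj_of_rel rc1)
  · show φ cN 1 = (kperm) 1
    rw [show (kperm : Equiv.Perm (Fin 3)) 1 = 0 by decide, φ_apply]
    exact e3_eq (conj_of_rel rc2)
  · show φ cN 2 = (kperm) 2
    rw [show (kperm : Equiv.Perm (Fin 3)) 2 = 1 by decide, φ_apply]
    exact e3_eq (conj_of_rel rc3)

lemma cases6 : ∀ σ : Equiv.Perm (Fin 3), σ = 1 ∨ σ = Equiv.swap 0 1 ∨ σ = kperm ∨
    σ = kperm * kperm ∨ σ = Equiv.swap 0 1 * kperm ∨ σ = kperm * Equiv.swap 0 1 := by decide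

lemma φ_surj : Function.Surjective φ := by
  intro σ
  rcases cases6 σ with rfl|rfl|rfl|rfl|rfl|rfl
  · exact ⟨1, map_one φ⟩
  · exact ⟨bN, φb⟩
  · exact ⟨cN, φc⟩
  · exact ⟨cN * cN, by rw [_root_.map_mul, φc]⟩
  · exact ⟨bN * cN, by rw [_root_.map_mul, φb, φc]⟩
  · exact ⟨cN * bN, by rw [_root_.map_mul, φb, φc]⟩

lemma ker_φ : φ.ker = Wgrp.subgroupOf (Subgroup.normalizer (Wgrp : Set PGL2C)) := by
  ext g
  rw [MonoidHom.mem_ker, Subgroup.mem_subgroupOf]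
  constructor
  · intro hg
    have fix : ∀ i : Fin 3, (g • E3 i).1 = (E3 i).1 := by
      intro i
      have h1 : e3 (g • E3 i) = i := by rw [← φ_apply, hg]; rfl
      have h2 : e3 (E3 i) = i := E3.symm_apply_apply i
      exact congrArg Subtype.val (e3.injective (h1.trans h2.symm))
    have c1 : (g : PGL2C) * o1 * (g : PGL2C)⁻¹ = o1 := fix 0
    have c2 : (g : PGL2C) * o2 * (g : PGL2C)⁻¹ = o2 := fix 1
    rw [mul_inv_eq_iff_eq_mul] at c1 c2
    obtain ⟨u, hu⟩ := QuotientGroup.mk_surjective (g : PGL2C)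
    rw [← hu] at c1 c2 ⊢
    exact central c1 c2
  · intro hg
    have commAll : ∀ x : PGL2C, (x = o1 ∨ x = o2 ∨ x = o3) →
        (g : PGL2C) * x * (g : PGL2C)⁻¹ = x := by
      intro x hx
      rcases W_eq hg with h|h|h|h
      · rw [h]; group
      · rcases hx with rfl|rfl|rfl
        · rw [h]; exact conj_of_rel rfl
        · rw [h]; exact conj_of_rel (t12.trans t21.symm)
        · rw [h]; exact conj_of_rel (t13.trans t31.symm)
      · rcases hx with rfl|rfl|rfl
        · rw [h]; exact conj_of_rel (t21.trans t12.symm)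
        · rw [h]; exact conj_of_rel rfl
        · rw [h]; exact conj_of_rel (t23.trans t32.symm)
      · rcases hx with rfl|rfl|rfl
        · rw [h]; exact conj_of_rel (t31.trans t13.symm)
        · rw [h]; exact conj_of_rel (t32.trans t23.symm)
        · rw [h]; exact conj_of_rel rfl
    refine Equiv.ext fun i => ?_
    rw [φ_apply]
    have hfix : (g • E3 i).1 = (E3 i).1 := commAll _ (E3 i).2
    rw [show g • E3 i = E3 i from Subtype.ext hfix]
    exact E3.symm_apply_apply i

end S3Aux

/-- The quotient of the normalizer of `W` in `PGL₂(ℂ)` by `W` is isomorphic to the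
symmetric group `S₃` on three letters. -/
theorem statement0 :
    Nonempty ((↥(Subgroup.normalizer (Wgrp : Set PGL2C)) ⧸ Wgrp.subgroupOf (Subgroup.normalizer (Wgrp : Set PGL2C))) ≃* Equiv.Perm (Fin 3)) := by
  exact ⟨(QuotientGroup.quotientMulEquivOfEq S3Aux.ker_φ.symm).trans
    (QuotientGroup.quotientKerEquivOfSurjective S3Aux.φ S3Aux.φ_surj)⟩
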